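/- Let Q ⊂ ℝ^n be a full-dimensional simplicial convex polytope with 0 in its interior, equipped with a weight function a : V(Q) → ℝ_{>0}. If u ∈ V(Q) and v ∈ V(Q*) satisfy u ∉ F_v and a(u)(1+⟨v,u⟩) = ε_Q (i.e. the pair (u,v) realizes the minimum defining ε_Q), then u is adjacent to F_v: there exists a facet F of Q containing u such that F ∩ F_v is a face of Q of dimension n−2. -/

import Mathlib

open Matrix

/-- The polar dual `Q* = {v | ⟨v,u⟩ ≥ -1 for all u ∈ Q}`. -/
def polarDual {n : ℕ} (Q : Set (Fin n → ℝ)) : Set (Fin n → ℝ) :=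
  {v | ∀ u ∈ Q, -1 ≤ v ⬝ᵥ u}

/-- The facet `F_v = {u ∈ Q | ⟨v,u⟩ = -1}` of `Q` corresponding to a vertex `v` of `Q*`. -/
def facetOf {n : ℕ} (Q : Set (Fin n → ℝ)) (v : Fin n → ℝ) : Set (Fin n → ℝ) :=
  {u ∈ Q | v ⬝ᵥ u = -1}

/-- The set of numbers `a(u)(1 + ⟨v,u⟩)` for `u ∈ V(Q)`, `v ∈ V(Q*)`, `u ∉ F_v`;
`ε_Q` is its minimum. -/
def epsSet {n : ℕ} (VQ VQd : Finset (Fin n → ℝ)) (a : (Fin n → ℝ) → ℝ) : Set ℝ :=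
  {x | ∃ u ∈ VQ, ∃ v ∈ VQd, v ⬝ᵥ u ≠ -1 ∧ x = a u * (1 + v ⬝ᵥ u)}

lemma dot_linear {n : ℕ} (w : Fin n → ℝ) :
    IsLinearMap ℝ (fun x : Fin n → ℝ => w ⬝ᵥ x) :=
  ⟨fun a b => dotProduct_add w a b, fun c x => dotProduct_smul c w x⟩

lemma mem_polarDual_hull_iff {n : ℕ} (VQ : Finset (Fin n → ℝ)) (w : Fin n → ℝ) :
    w ∈ polarDual (convexHull ℝ (VQ : Set (Fin n → ℝ))) ↔ ∀ p ∈ VQ, -1 ≤ w ⬝ᵥ p := by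
  constructor
  · exact fun h p hp => h p (subset_convexHull ℝ _ hp)
  · intro h x hx
    exact convexHull_min (fun p hp => h p hp) (convex_halfSpace_ge (dot_linear w) (-1)) hx

lemma exists_perturb {n : ℕ} (VQ : Finset (Fin n → ℝ)) (hne : VQ.Nonempty)
    (v d : Fin n → ℝ) (hv : ∀ p ∈ VQ, -1 ≤ v ⬝ᵥ p)
    (hd : ∀ p ∈ VQ, v ⬝ᵥ p = -1 → 0 ≤ d ⬝ᵥ p) :
    ∃ δ : ℝ, 0 < δ ∧ ∀ μ : ℝ, 0 ≤ μ → μ ≤ δ → ∀ p ∈ VQ, -1 ≤ v ⬝ᵥ p + μ * (d ⬝ᵥ p) := by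
  classical
  set g : (Fin n → ℝ) → ℝ :=
    fun p => if v ⬝ᵥ p = -1 then (1:ℝ) else (v ⬝ᵥ p + 1) / (1 + |d ⬝ᵥ p|) with hg
  refine ⟨VQ.inf' hne g, ?_, ?_⟩
  · apply (Finset.lt_inf'_iff _).2
    intro p hp
    show (0:ℝ) < if v ⬝ᵥ p = -1 then (1:ℝ) else (v ⬝ᵥ p + 1) / (1 + |d ⬝ᵥ p|)
    split
    · norm_num
    · have h1 : 0 < 1 + |d ⬝ᵥ p| := by positivity
      have h2 : -1 < v ⬝ᵥ p := lt_of_le_of_ne (hv p hp) (by tauto)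
      exact div_pos (by linarith) h1
  · intro μ hμ0 hμδ p hp
    have hμg : μ ≤ g p := hμδ.trans (Finset.inf'_le _ hp)
    replace hμg : μ ≤ if v ⬝ᵥ p = -1 then (1:ℝ) else (v ⬝ᵥ p + 1) / (1 + |d ⬝ᵥ p|) := hμg
    by_cases hvp : v ⬝ᵥ p = -1
    · rw [hvp]
      have := hd p hp hvp
      nlinarith
    · rw [if_neg hvp] at hμg
      have h1 : 0 < 1 + |d ⬝ᵥ p| := by positivity
      have h2 : μ * (1 + |d ⬝ᵥ p|) ≤ v ⬝ᵥ p + 1 := (le_div_iff₀ h1).1 hμg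
      have h3 : 0 ≤ μ * (|d ⬝ᵥ p| + d ⬝ᵥ p) :=
        mul_nonneg hμ0 (by linarith [neg_abs_le (d ⬝ᵥ p)])
      nlinarith

lemma dot_sum {n : ℕ} (w : Fin n → ℝ) {ι : Type*} (s : Finset ι) (f : ι → (Fin n → ℝ)) :
    w ⬝ᵥ (∑ j ∈ s, f j) = ∑ j ∈ s, w ⬝ᵥ f j := by
  simp only [dotProduct, Finset.sum_apply, Finset.mul_sum]
  exact Finset.sum_comm

lemma convexcomb_max {α β x₁ x₂ μ : ℝ} (hα : 0 < α) (hβ : 0 < β) (hαβ : α + β = 1)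
    (h1 : x₁ ≤ μ) (h2 : x₂ ≤ μ) (h : α * x₁ + β * x₂ = μ) : x₁ = μ ∧ x₂ = μ := by
  have k1 : 0 ≤ α * (μ - x₁) := mul_nonneg hα.le (by linarith)
  have k2 : 0 ≤ β * (μ - x₂) := mul_nonneg hβ.le (by linarith)
  have hzero : α * (μ - x₁) + β * (μ - x₂) = 0 := by linear_combination μ * hαβ - h
  have e1 : α * (μ - x₁) = 0 := by linarith
  have e2 : β * (μ - x₂) = 0 := by linarith
  constructor
  · have := (mul_eq_zero.1 e1).resolve_left hα.ne'
    linarith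
  · have := (mul_eq_zero.1 e2).resolve_left hβ.ne'
    linarith

lemma convexcomb_eq {α β p q : ℝ} (ha : 0 < α) (hb : 0 < β) (hab : α + β = 1)
    (hp : -1 ≤ p) (hq : -1 ≤ q) (h : α * p + β * q = -1) : p = -1 ∧ q = -1 := by
  constructor <;> nlinarith [mul_nonneg ha.le (by linarith : (0:ℝ) ≤ p + 1),
    mul_nonneg hb.le (by linarith : (0:ℝ) ≤ q + 1)]

set_option maxHeartbeats 2000000 in
/-- If `(u,v)` realizes the minimum `ε_Q`, then `u` is adjacent to `F_v`:
some facet `F` of `Q` contains `u` and `F ∩ F_v` has dimension `n - 2`. -/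
theorem minimizing_vertex_is_adjacent {n : ℕ} (hn : 1 ≤ n)
    (VQ VQd : Finset (Fin n → ℝ))
    -- `VQ` is the vertex set of the polytope `Q = conv(VQ)`
    (hVQ : (VQ : Set (Fin n → ℝ)) =
      Set.extremePoints ℝ (convexHull ℝ (VQ : Set (Fin n → ℝ))))
    -- `0` lies in the interior of `Q` (in particular `Q` is full-dimensional)
    (h0 : (0 : Fin n → ℝ) ∈ interior (convexHull ℝ (VQ : Set (Fin n → ℝ))))
    -- `VQd` is the vertex set of the polar dual `Q*`
    (hVQd : (VQd : Set (Fin n → ℝ)) =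
      Set.extremePoints ℝ (polarDual (convexHull ℝ (VQ : Set (Fin n → ℝ)))))
    -- `Q` is simplicial: every facet has exactly `n` vertices
    (hsimp : ∀ v ∈ VQd, (VQ.filter fun u => v ⬝ᵥ u = -1).card = n)
    -- the weight function `a : V(Q) → ℝ_{>0}`
    (a : (Fin n → ℝ) → ℝ) (ha : ∀ u ∈ VQ, 0 < a u)
    -- `ε` is the minimum `ε_Q`
    (ε : ℝ) (hε : IsLeast (epsSet VQ VQd a) ε)
    -- `(u, v)` realizes the minimum, with `u ∉ F_v`
    (u v : Fin n → ℝ) (hu : u ∈ VQ) (hv : v ∈ VQd)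
    (huFv : v ⬝ᵥ u ≠ -1) (hmin : a u * (1 + v ⬝ᵥ u) = ε) :
    ∃ v' ∈ VQd, u ∈ facetOf (convexHull ℝ (VQ : Set (Fin n → ℝ))) v' ∧
      Module.finrank ℝ
        (affineSpan ℝ (facetOf (convexHull ℝ (VQ : Set (Fin n → ℝ))) v' ∩
          facetOf (convexHull ℝ (VQ : Set (Fin n → ℝ))) v)).direction = n - 2 := by
  
  classical
  obtain ⟨m, rfl⟩ : ∃ m, n = m + 1 := ⟨n - 1, (Nat.succ_pred_eq_of_pos hn).symm⟩
  set Q : Set (Fin (m+1) → ℝ) := convexHull ℝ (VQ : Set (Fin (m+1) → ℝ)) with hQdef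
  have hVQQ : (VQ : Set (Fin (m+1) → ℝ)) ⊆ Q := subset_convexHull ℝ _
  have huQ : u ∈ Q := hVQQ hu
  have hQconv : Convex ℝ Q := convex_convexHull ℝ _
  have hVQne : VQ.Nonempty := by
    by_contra hne
    rw [Finset.not_nonempty_iff_eq_empty] at hne
    rw [hne] at hQdef
    simp only [Finset.coe_empty, convexHull_empty] at hQdef
    rw [hQdef] at h0
    simp at h0
  have hvPD : ∀ p ∈ VQ, -1 ≤ v ⬝ᵥ p := by
    have hvm : v ∈ polarDual Q := extremePoints_subset (hVQd ▸ (Finset.mem_coe.2 hv))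
    exact (mem_polarDual_hull_iff VQ v).1 hvm
  have hvext : v ∈ Set.extremePoints ℝ (polarDual Q) := hVQd ▸ (Finset.mem_coe.2 hv)
  have hvu : -1 < v ⬝ᵥ u := lt_of_le_of_ne (hvPD u hu) (Ne.symm huFv)
  -- the vertices of the facet F_v
  set S : Finset (Fin (m+1) → ℝ) := VQ.filter (fun p => v ⬝ᵥ p = -1) with hSdef
  have hScard : S.card = m + 1 := hsimp v hv
  set e : ↥S ≃ Fin (m+1) := S.equivFinOfCardEq hScard with hedef
  set t : Fin (m+1) → (Fin (m+1) → ℝ) := fun k => ((e.symm k : ↥S) : Fin (m+1) → ℝ) with htdef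
  have htS : ∀ k, (t k) ∈ S := fun k => (e.symm k).2
  have htVQ : ∀ k, t k ∈ VQ := fun k => (Finset.mem_filter.1 (htS k)).1
  have htv : ∀ k, v ⬝ᵥ t k = -1 := fun k => (Finset.mem_filter.1 (htS k)).2
  have hSt : ∀ p ∈ VQ, v ⬝ᵥ p = -1 → ∃ k, t k = p := by
    intro p hp hvp
    refine ⟨e ⟨p, Finset.mem_filter.2 ⟨hp, hvp⟩⟩, ?_⟩
    simp [htdef]
  set M : Matrix (Fin (m+1)) (Fin (m+1)) ℝ := Matrix.of t with hMdef
  have hMrow : ∀ (x : Fin (m+1) → ℝ) k, (M *ᵥ x) k = t k ⬝ᵥ x := fun x k => rfl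
  have hdet : M.det ≠ 0 := by
    intro h0d
    obtain ⟨d₀, hd₀ne, hd₀⟩ := (Matrix.exists_mulVec_eq_zero_iff).2 h0d
    have hd₀t : ∀ k, t k ⬝ᵥ d₀ = 0 := fun k => by
      have := congrFun hd₀ k; simpa [hMrow] using this
    have hzero : ∀ p ∈ VQ, v ⬝ᵥ p = -1 → d₀ ⬝ᵥ p = 0 := by
      intro p hp hvp
      obtain ⟨k, rfl⟩ := hSt p hp hvp
      rw [dotProduct_comm]; exact hd₀t k
    obtain ⟨δ₁, hδ₁, H₁⟩ := exists_perturb VQ hVQne v d₀ hvPD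
      (fun p hp h => (hzero p hp h).ge)
    obtain ⟨δ₂, hδ₂, H₂⟩ := exists_perturb VQ hVQne v (-d₀) hvPD (fun p hp h => by
      rw [neg_dotProduct, hzero p hp h, neg_zero])
    set δ := min δ₁ δ₂ with hδdef
    have hδ : 0 < δ := lt_min hδ₁ hδ₂
    have hx₁ : ∀ p ∈ VQ, -1 ≤ (v + δ • d₀) ⬝ᵥ p := by
      intro p hp
      have := H₁ δ hδ.le (min_le_left _ _) p hp
      simpa [add_dotProduct, smul_dotProduct, smul_eq_mul] using this
    have hx₂ : ∀ p ∈ VQ, -1 ≤ (v + δ • (-d₀)) ⬝ᵥ p := by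
      intro p hp
      have := H₂ δ hδ.le (min_le_right _ _) p hp
      simpa [add_dotProduct, smul_dotProduct, smul_eq_mul] using this
    have hseg : v ∈ openSegment ℝ (v + δ • d₀) (v + δ • (-d₀)) := by
      refine ⟨1/2, 1/2, by norm_num, by norm_num, by norm_num, ?_⟩
      module
    have hext := hvext.2 ((mem_polarDual_hull_iff VQ _).2 hx₁)
      ((mem_polarDual_hull_iff VQ _).2 hx₂) hseg
    have h1 : δ • d₀ = 0 := by
      have := hext
      have h2 : v + δ • d₀ = v + 0 := by rw [add_zero]; exact this
      exact add_left_cancel h2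
    rcases smul_eq_zero.1 h1 with h | h
    · exact hδ.ne' h
    · exact hd₀ne h
  have hunit : IsUnit M.det := isUnit_iff_ne_zero.2 hdet
  have hinj : ∀ x y : Fin (m+1) → ℝ, (∀ k, t k ⬝ᵥ x = t k ⬝ᵥ y) → x = y := by
    intro x y hxy
    have hMxy : M *ᵥ x = M *ᵥ y := funext fun k => hxy k
    calc x = (M⁻¹ * M) *ᵥ x := by rw [Matrix.nonsing_inv_mul M hunit, Matrix.one_mulVec]
    _ = M⁻¹ *ᵥ (M *ᵥ x) := by rw [← Matrix.mulVec_mulVec]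
    _ = M⁻¹ *ᵥ (M *ᵥ y) := by rw [hMxy]
    _ = (M⁻¹ * M) *ᵥ y := by rw [Matrix.mulVec_mulVec]
    _ = y := by rw [Matrix.nonsing_inv_mul M hunit, Matrix.one_mulVec]
  set vstar : Fin (m+1) → (Fin (m+1) → ℝ) := fun j => M⁻¹ *ᵥ Pi.single j 1 with hvstardef
  have hts : ∀ k j, t k ⬝ᵥ vstar j = if k = j then 1 else 0 := by
    intro k j
    have h1 : (M *ᵥ (M⁻¹ *ᵥ Pi.single j 1)) k = (Pi.single j 1 : Fin (m+1) → ℝ) k := by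
      rw [Matrix.mulVec_mulVec, Matrix.mul_nonsing_inv M hunit, Matrix.one_mulVec]
    have h2 : t k ⬝ᵥ vstar j = (M *ᵥ (M⁻¹ *ᵥ Pi.single j 1)) k := rfl
    rw [h2, h1, Pi.single_apply]
  have hdecomp : ∀ x : Fin (m+1) → ℝ, x = v + ∑ j, ((t j ⬝ᵥ x) + 1) • vstar j := by
    intro x
    refine hinj _ _ fun k => ?_
    rw [dotProduct_add, dot_sum]
    simp only [dotProduct_smul, hts, smul_eq_mul, mul_ite, mul_one, mul_zero]
    rw [Finset.sum_ite_eq (Finset.univ : Finset (Fin (m+1))) k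
      (fun j => (t j ⬝ᵥ x) + 1)]
    simp only [Finset.mem_univ, if_true]
    rw [dotProduct_comm (t k) v, htv k]
    ring
  -- a supporting functional at `u`
  have hz : ∃ z : Fin (m+1) → ℝ, (∀ p ∈ VQ, -1 ≤ z ⬝ᵥ p) ∧ z ⬝ᵥ u = -1 := by
    have huext : u ∈ Set.extremePoints ℝ Q := hVQ ▸ (Finset.mem_coe.2 hu)
    have hui : u ∉ interior Q := by
      intro hui
      obtain ⟨δ, hδ, hball⟩ := Metric.isOpen_iff.1 isOpen_interior u hui
      set eps : Fin (m+1) → ℝ := Pi.single 0 (δ/2) with hepsdef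
      have heps : ‖eps‖ < δ := by
        have h1 : ‖eps‖ ≤ δ/2 := by
          apply pi_norm_le_iff_of_nonneg (by linarith) |>.2
          intro j
          rw [hepsdef, Real.norm_eq_abs, Pi.single_apply]
          split
          · rw [abs_of_nonneg (by linarith : (0:ℝ) ≤ δ/2)]
          · simp only [abs_zero]
            linarith
        linarith
      have h₁ : u + eps ∈ Q := interior_subset (hball (by
        rw [Metric.mem_ball, dist_eq_norm, add_sub_cancel_left]; exact heps))
      have h₂ : u - eps ∈ Q := interior_subset (hball (by
        rw [Metric.mem_ball, dist_eq_norm, sub_sub_cancel_left, norm_neg]; exact heps))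
      have hseg : u ∈ openSegment ℝ (u + eps) (u - eps) := by
        refine ⟨1/2, 1/2, by norm_num, by norm_num, by norm_num, ?_⟩
        module
      have hext := huext.2 h₁ h₂ hseg
      have : eps = 0 := by
        have h3 : u + eps = u + 0 := by rw [add_zero]; exact hext
        exact add_left_cancel h3
      have h4 := congrFun this 0
      rw [hepsdef] at h4
      simp [Pi.single_eq_same] at h4
      linarith
    obtain ⟨f, hf⟩ := geometric_hahn_banach_open_point (hQconv.interior) isOpen_interior hui
    have hfu : 0 < f u := by have := hf 0 h0; simpa using this
    have hfq : ∀ x ∈ Q, f x ≤ f u := by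
      intro x hx
      by_contra hgt
      push_neg at hgt
      have hfx : 0 < f x := lt_trans hfu hgt
      set θ : ℝ := (f x - f u)/(2 * f x) with hθ
      have hθ0 : 0 < θ := div_pos (by linarith) (by positivity)
      have hθ1 : θ < 1 := by rw [div_lt_one (by positivity)]; linarith
      have hmem : θ • (0 : Fin (m+1) → ℝ) + (1 - θ) • x ∈ interior Q :=
        hQconv.combo_interior_closure_mem_interior h0 (subset_closure hx)
          hθ0 (by linarith) (by ring)
      have hlt := hf _ hmem
      simp only [map_add, _root_.map_smul, map_zero, smul_zero, smul_eq_mul, zero_add] at hlt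
      have h2 : (1 - θ) * f x = (f x + f u)/2 := by
        field_simp [hθ]
        have h7 : θ * f x * 2 = f x - f u := by rw [hθ]; field_simp
        linarith
      rw [h2] at hlt
      linarith
    set y : Fin (m+1) → ℝ := fun j => f (fun k => if j = k then 1 else 0) with hydef
    have hrep : ∀ x, f x = y ⬝ᵥ x := by
      intro x
      conv_lhs => rw [pi_eq_sum_univ x]
      rw [map_sum]
      simp only [_root_.map_smul, smul_eq_mul]
      rw [dotProduct]
      apply Finset.sum_congr rfl
      intro j _
      rw [hydef]
      ring
    refine ⟨(-(f u)⁻¹) • y, ?_, ?_⟩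
    · intro p hp
      rw [smul_dotProduct, smul_eq_mul, ← hrep p]
      have h5 := hfq p (hVQQ hp)
      have h6 : (f u)⁻¹ * f p ≤ (f u)⁻¹ * f u :=
        mul_le_mul_of_nonneg_left h5 (inv_pos.2 hfu).le
      rw [inv_mul_cancel₀ hfu.ne'] at h6
      nlinarith
    · rw [smul_dotProduct, smul_eq_mul, ← hrep u, neg_mul, inv_mul_cancel₀ hfu.ne']
  obtain ⟨z, hz1, hz2⟩ := hz
  have hsum : u ⬝ᵥ z = u ⬝ᵥ v + ∑ j, ((t j ⬝ᵥ z) + 1) * (u ⬝ᵥ vstar j) := by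
    conv_lhs => rw [hdecomp z]
    rw [dotProduct_add, dot_sum]
    simp only [dotProduct_smul, smul_eq_mul]
  have hzu : u ⬝ᵥ z = -1 := by rw [dotProduct_comm]; exact hz2
  have hneg : ∑ j, ((t j ⬝ᵥ z) + 1) * (u ⬝ᵥ vstar j) < 0 := by
    have huv : u ⬝ᵥ v = v ⬝ᵥ u := dotProduct_comm u v
    rw [hzu] at hsum
    rw [huv] at hsum
    linarith
  obtain ⟨i, hci⟩ : ∃ i, u ⬝ᵥ vstar i < 0 := by
    by_contra hall
    push_neg at hall
    have hnn : 0 ≤ ∑ j, ((t j ⬝ᵥ z) + 1) * (u ⬝ᵥ vstar j) := by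
      apply Finset.sum_nonneg
      intro j _
      apply mul_nonneg _ (hall j)
      have := hz1 (t j) (htVQ j)
      rw [dotProduct_comm (t j) z]
      linarith
    linarith
  set d : Fin (m+1) → ℝ := vstar i with hddef
  have hdt : ∀ k, t k ⬝ᵥ d = if k = i then 1 else 0 := fun k => hts k i
  have hdu : u ⬝ᵥ d < 0 := hci
  -- the feasible segment in direction d
  set A : Set ℝ := {μ | 0 ≤ μ ∧ ∀ p ∈ VQ, -1 ≤ v ⬝ᵥ p + μ * (d ⬝ᵥ p)} with hAdef
  have hexp : ∀ (μ : ℝ) (p : Fin (m+1) → ℝ), (v + μ • d) ⬝ᵥ p = v ⬝ᵥ p + μ * (d ⬝ᵥ p) := by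
    intro μ p
    rw [add_dotProduct, smul_dotProduct, smul_eq_mul]
  have hA0 : (0:ℝ) ∈ A := ⟨le_refl 0, fun p hp => by simpa using hvPD p hp⟩
  have hAbdd : BddAbove A := by
    refine ⟨(v ⬝ᵥ u + 1)/(-(d ⬝ᵥ u)), fun μ hμ => ?_⟩
    have h1 := hμ.2 u hu
    have h2 : d ⬝ᵥ u < 0 := by rw [dotProduct_comm]; exact hdu
    rw [le_div_iff₀ (by linarith)]
    nlinarith [hμ.1]
  have hAclosed : IsClosed A := by
    have hAeq : A = Set.Ici (0:ℝ) ∩ ⋂ p ∈ VQ, {μ : ℝ | -1 ≤ v ⬝ᵥ p + μ * (d ⬝ᵥ p)} := by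
      ext μ
      simp only [hAdef, Set.mem_setOf_eq, Set.mem_inter_iff, Set.mem_Ici, Set.mem_iInter]
    rw [hAeq]
    refine isClosed_Ici.inter (isClosed_biInter fun p hp => ?_)
    exact isClosed_le continuous_const (by fun_prop)
  set μs : ℝ := sSup A with hμsdef
  have hμsA : μs ∈ A := hAclosed.csSup_mem ⟨0, hA0⟩ hAbdd
  obtain ⟨δ, hδpos, hδ⟩ := exists_perturb VQ hVQne v d hvPD (fun p hp h => by
    obtain ⟨k, rfl⟩ := hSt p hp h
    rw [dotProduct_comm, hdt k]
    split <;> norm_num)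
  have hδA : δ ∈ A := ⟨hδpos.le, fun p hp => hδ δ hδpos.le le_rfl p hp⟩
  have hμspos : 0 < μs := lt_of_lt_of_le hδpos (le_csSup hAbdd hδA)
  set w : Fin (m+1) → ℝ := v + μs • d with hwdef
  have hwPD : ∀ p ∈ VQ, -1 ≤ w ⬝ᵥ p := fun p hp => by
    rw [hwdef, hexp]; exact hμsA.2 p hp
  have hwt : ∀ k, t k ⬝ᵥ w = -1 + (if k = i then μs else 0) := by
    intro k
    rw [hwdef, dotProduct_comm, hexp, htv k, dotProduct_comm d (t k), hdt k]
    split <;> ring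
  -- `w` is an extreme point of the polar dual, hence a vertex
  have hwext : w ∈ Set.extremePoints ℝ (polarDual Q) := by
    refine ⟨(mem_polarDual_hull_iff VQ w).2 hwPD, ?_⟩
    intro x₁ hx₁ x₂ hx₂ hseg
    obtain ⟨α, β, hα, hβ, hαβ, hcomb⟩ := hseg
    have hx₁PD : ∀ p ∈ VQ, -1 ≤ x₁ ⬝ᵥ p := (mem_polarDual_hull_iff VQ x₁).1 hx₁
    have hx₂PD : ∀ p ∈ VQ, -1 ≤ x₂ ⬝ᵥ p := (mem_polarDual_hull_iff VQ x₂).1 hx₂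
    have hpair : ∀ k, t k ⬝ᵥ (α • x₁ + β • x₂) = α * (t k ⬝ᵥ x₁) + β * (t k ⬝ᵥ x₂) := by
      intro k
      rw [dotProduct_add, dotProduct_smul, dotProduct_smul, smul_eq_mul, smul_eq_mul]
    have hkey : ∀ k, k ≠ i → t k ⬝ᵥ x₁ = -1 ∧ t k ⬝ᵥ x₂ = -1 := by
      intro k hk
      have hsumk : α * (t k ⬝ᵥ x₁) + β * (t k ⬝ᵥ x₂) = -1 := by
        rw [← hpair, hcomb, hwt k, if_neg hk, add_zero]
      exact convexcomb_eq hα hβ hαβ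
        (by rw [dotProduct_comm]; exact hx₁PD _ (htVQ k))
        (by rw [dotProduct_comm]; exact hx₂PD _ (htVQ k)) hsumk
    have hline : ∀ x : Fin (m+1) → ℝ, (∀ p ∈ VQ, -1 ≤ x ⬝ᵥ p) →
        (∀ k, k ≠ i → t k ⬝ᵥ x = -1) →
        (t i ⬝ᵥ x + 1) ∈ A ∧ x = v + (t i ⬝ᵥ x + 1) • d := by
      intro x hxPD hxk
      have hμ₁0 : 0 ≤ t i ⬝ᵥ x + 1 := by
        have := hxPD (t i) (htVQ i)
        rw [dotProduct_comm (t i) x]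
        linarith
      have hxe : x = v + (t i ⬝ᵥ x + 1) • d := by
        apply hinj
        intro k
        rw [dotProduct_add, dotProduct_smul, smul_eq_mul, hdt k,
          dotProduct_comm (t k) v, htv k]
        by_cases hk : k = i
        · subst hk; rw [if_pos rfl]; ring
        · rw [if_neg hk, hxk k hk]; ring
      refine ⟨⟨hμ₁0, fun p hp => ?_⟩, hxe⟩
      rw [← hexp, ← hxe]
      exact hxPD p hp
    obtain ⟨hμ₁A, hx₁e⟩ := hline x₁ hx₁PD (fun k hk => (hkey k hk).1)
    obtain ⟨hμ₂A, hx₂e⟩ := hline x₂ hx₂PD (fun k hk => (hkey k hk).2)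
    have hμ₁le : t i ⬝ᵥ x₁ + 1 ≤ μs := le_csSup hAbdd hμ₁A
    have hμ₂le : t i ⬝ᵥ x₂ + 1 ≤ μs := le_csSup hAbdd hμ₂A
    have hcomb' : α * (t i ⬝ᵥ x₁) + β * (t i ⬝ᵥ x₂) = -1 + μs := by
      rw [← hpair, hcomb, hwt i, if_pos rfl]
    have hcomb'' : α * (t i ⬝ᵥ x₁ + 1) + β * (t i ⬝ᵥ x₂ + 1) = μs := by
      have h9 : α * (t i ⬝ᵥ x₁ + 1) = α * (t i ⬝ᵥ x₁) + α := by ring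
      have h10 : β * (t i ⬝ᵥ x₂ + 1) = β * (t i ⬝ᵥ x₂) + β := by ring
      rw [h9, h10]
      linarith [hcomb']
    obtain ⟨hμ₁eq, hμ₂eq⟩ := convexcomb_max hα hβ hαβ hμ₁le hμ₂le hcomb''
    · rw [hx₁e, hμ₁eq, ← hwdef]
  have hwVQd : w ∈ VQd := by
    rw [← Finset.mem_coe, hVQd]
    exact hwext
  have hwu : w ⬝ᵥ u = -1 := by
    by_contra hne
    have hgt : -1 < w ⬝ᵥ u := lt_of_le_of_ne (hwPD u hu) (Ne.symm hne)
    have hlt : w ⬝ᵥ u < v ⬝ᵥ u := by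
      rw [hwdef, hexp]
      have hduc : d ⬝ᵥ u < 0 := by rw [dotProduct_comm]; exact hdu
      nlinarith
    have hmem : a u * (1 + w ⬝ᵥ u) ∈ epsSet VQ VQd a := ⟨u, hu, w, hwVQd, hne, rfl⟩
    have h1 := hε.2 hmem
    have h2 : a u * (1 + w ⬝ᵥ u) < a u * (1 + v ⬝ᵥ u) := by
      have := ha u hu
      nlinarith
    rw [hmin] at h2
    linarith
  -- conclusion: `w` is the desired dual vertex
  refine ⟨w, hwVQd, ⟨huQ, hwu⟩, ?_⟩
  rw [direction_affineSpan]
  have hμsne : μs ≠ 0 := hμspos.ne'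
  set fv : (Fin (m+1) → ℝ) →ₗ[ℝ] ℝ := IsLinearMap.mk' _ (dot_linear v) with hfvdef
  set fd : (Fin (m+1) → ℝ) →ₗ[ℝ] ℝ := IsLinearMap.mk' _ (dot_linear d) with hfddef
  set Ψ : (Fin (m+1) → ℝ) →ₗ[ℝ] ℝ × ℝ := fv.prod fd with hΨdef
  have hΨapp : ∀ x, Ψ x = (v ⬝ᵥ x, d ⬝ᵥ x) := fun x => rfl
  set W : Set (Fin (m+1) → ℝ) := facetOf Q w ∩ facetOf Q v with hWdef
  have hWsub : vectorSpan ℝ W ≤ LinearMap.ker Ψ := by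
    rw [vectorSpan_def, Submodule.span_le]
    rintro x hx
    rw [Set.mem_vsub] at hx
    obtain ⟨x₁, hx₁, x₂, hx₂, rfl⟩ := hx
    obtain ⟨⟨hx₁Q, hwx₁⟩, _, hvx₁⟩ := hx₁
    obtain ⟨⟨hx₂Q, hwx₂⟩, _, hvx₂⟩ := hx₂
    have hveq : v ⬝ᵥ (x₁ - x₂) = 0 := by rw [dotProduct_sub, hvx₁, hvx₂]; ring
    have hweq : w ⬝ᵥ (x₁ - x₂) = 0 := by rw [dotProduct_sub, hwx₁, hwx₂]; ring
    have hdeq : d ⬝ᵥ (x₁ - x₂) = 0 := by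
      have h3 : (v + μs • d) ⬝ᵥ (x₁ - x₂) = 0 := by rw [← hwdef]; exact hweq
      rw [add_dotProduct, smul_dotProduct, smul_eq_mul, hveq, zero_add] at h3
      rcases mul_eq_zero.1 h3 with h | h
      · exact absurd h hμsne
      · exact h
    have hker : Ψ (x₁ -ᵥ x₂) = 0 := by
      rw [vsub_eq_sub, hΨapp, Prod.mk_eq_zero]
      exact ⟨hveq, hdeq⟩
    exact LinearMap.mem_ker.2 hker
  have htot : Module.finrank ℝ (Fin (m+1) → ℝ) = m + 1 := by
    simp [Module.finrank_pi]
  have hkerrank : Module.finrank ℝ (LinearMap.ker Ψ) = m - 1 := by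
    rcases Nat.eq_zero_or_pos m with hm | hm
    · subst hm
      have hker : LinearMap.ker Ψ = ⊥ := by
        rw [Submodule.eq_bot_iff]
        intro x hx
        have h0x := LinearMap.mem_ker.1 hx
        have hdx : d ⬝ᵥ x = 0 := by
          have := congrArg Prod.snd h0x
          rw [hΨapp] at this
          simpa using this
        have hd1 : t i ⬝ᵥ d = 1 := by rw [hdt i, if_pos rfl]
        have hd1' : t i 0 * d 0 = 1 := by
          simpa [dotProduct, Fin.sum_univ_one] using hd1
        have hdx' : d 0 * x 0 = 0 := by
          simpa [dotProduct, Fin.sum_univ_one] using hdx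
        have hd0 : d 0 ≠ 0 := by
          intro hc; rw [hc] at hd1'; simp at hd1'
        have hx0 : x 0 = 0 := (mul_eq_zero.1 hdx').resolve_left hd0
        funext j
        have hj : j = 0 := by
          have := j.isLt
          ext
          omega
        rw [hj, hx0]; rfl
      rw [hker]
      simp
    · obtain ⟨m', rfl⟩ : ∃ m', m = m' + 1 := ⟨m - 1, by omega⟩
      obtain ⟨j, hij⟩ : ∃ j : Fin (m' + 1 + 1), j ≠ i := exists_ne i
      have hdtj : d ⬝ᵥ t j = 0 := by rw [dotProduct_comm, hdt j, if_neg hij]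
      have hdti : d ⬝ᵥ t i = 1 := by rw [dotProduct_comm, hdt i, if_pos rfl]
      have hvtj : v ⬝ᵥ t j = -1 := htv j
      have hvti : v ⬝ᵥ t i = -1 := htv i
      have hsurj : Function.Surjective Ψ := by
        rintro ⟨c₁, c₂⟩
        refine ⟨c₁ • (-(t j)) + c₂ • (t i - t j), ?_⟩
        rw [hΨapp]
        have e1 : v ⬝ᵥ (c₁ • (-(t j)) + c₂ • (t i - t j)) = c₁ := by
          rw [dotProduct_add, dotProduct_smul, dotProduct_smul, dotProduct_neg,
            dotProduct_sub, hvtj, hvti, smul_eq_mul, smul_eq_mul]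
          ring
        have e2 : d ⬝ᵥ (c₁ • (-(t j)) + c₂ • (t i - t j)) = c₂ := by
          rw [dotProduct_add, dotProduct_smul, dotProduct_smul, dotProduct_neg,
            dotProduct_sub, hdtj, hdti, smul_eq_mul, smul_eq_mul]
          ring
        rw [e1, e2]
      have hrange : LinearMap.range Ψ = ⊤ := LinearMap.range_eq_top.2 hsurj
      have hrn := LinearMap.finrank_range_add_finrank_ker Ψ
      rw [hrange, htot] at hrn
      have h2 : Module.finrank ℝ (⊤ : Submodule ℝ (ℝ × ℝ)) = 2 := by
        rw [finrank_top]
        rw [Module.finrank_prod]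
        simp
      rw [h2] at hrn
      omega
  have hupper : Module.finrank ℝ (vectorSpan ℝ W) ≤ m - 1 := by
    rw [← hkerrank]
    exact Submodule.finrank_mono hWsub
  have hlower : m - 1 ≤ Module.finrank ℝ (vectorSpan ℝ W) := by
    rcases Nat.eq_zero_or_pos m with hm | hm
    · have h12 : m - 1 = 0 := by omega
      rw [h12]
      exact Nat.zero_le _
    · obtain ⟨m', rfl⟩ : ∃ m', m = m' + 1 := ⟨m - 1, by omega⟩
      have haff : AffineIndependent ℝ t := by
        rw [affineIndependent_iff]
        intro s g hg0 hgsum k hk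
        have h1 : (∑ kk ∈ s, g kk • t kk) ⬝ᵥ vstar k = 0 := by
          rw [hgsum]; exact zero_dotProduct _
        rw [dotProduct_comm, dot_sum] at h1
        have hvt : ∀ kk, vstar k ⬝ᵥ (g kk • t kk) = g kk * (if kk = k then 1 else 0) := by
          intro kk
          rw [dotProduct_smul, smul_eq_mul, dotProduct_comm (vstar k), hts]
        rw [Finset.sum_congr rfl (fun kk _ => hvt kk)] at h1
        simp only [mul_ite, mul_one, mul_zero] at h1
        rwa [Finset.sum_ite_eq' s k g, if_pos hk] at h1
      have haff2 : AffineIndependent ℝ (t ∘ (Fin.succAboveEmb i)) :=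
        haff.comp_embedding _
      have hcard : Fintype.card (Fin (m'+1)) = m' + 1 := by simp
      have hfr := haff2.finrank_vectorSpan hcard
      have hsubW : Set.range (t ∘ (Fin.succAboveEmb i)) ⊆ W := by
        rintro x ⟨k, rfl⟩
        have hki : (Fin.succAboveEmb i) k ≠ i := Fin.succAbove_ne i k
        refine ⟨⟨hVQQ (htVQ _), ?_⟩, ⟨hVQQ (htVQ _), htv _⟩⟩
        show w ⬝ᵥ t ((Fin.succAboveEmb i) k) = -1
        rw [dotProduct_comm, hwt _, if_neg hki, add_zero]
      have hmono := Submodule.finrank_mono (vectorSpan_mono ℝ hsubW)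
      rw [hfr] at hmono
      omega
  have h12 : m + 1 - 2 = m - 1 := by omega
  rw [h12]
  exact le_antisymm hupper hlower
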